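/- arXiv:2303.05715 — 3 statements merged into one kernel-verified Lean document; each statement's English description precedes it below -/
import Mathlib

section
/- Let $y_0, y_1, y_2$ be real numbers and for $\beta > 0$ define $p_i(\beta) = e^{\beta y_i} / \sum_{j=0}^{2} e^{\beta y_j}$. Then the Shannon entropy $H(\beta) = -\sum_{i=0}^{2} p_i(\beta) \log p_i(\beta)$ is monotonically decreasing in $\beta$ on $(0, \infty)$; that is, for $0 < \beta_1 \le \beta_2$, $H(\beta_2) \le H(\beta_1)$. -/
open Real Finset

noncomputable def softmax (y : Fin 3 → ℝ) (β : ℝ) (i : Fin 3) : ℝ :=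
  Real.exp (β * y i) / ∑ j, Real.exp (β * y j)

noncomputable def softmaxEntropy (y : Fin 3 → ℝ) (β : ℝ) : ℝ :=
  -∑ i, softmax y β i * Real.log (softmax y β i)

namespace SMaux

variable (y : Fin 3 → ℝ)

noncomputable def Z (b : ℝ) : ℝ := ∑ j, Real.exp (b * y j)
noncomputable def Z1 (b : ℝ) : ℝ := ∑ j, y j * Real.exp (b * y j)
noncomputable def Z2 (b : ℝ) : ℝ := ∑ j, (y j)^2 * Real.exp (b * y j)

lemma Zpos (b : ℝ) : 0 < Z y b := by
  apply Finset.sum_pos (fun j _ => Real.exp_pos _) ⟨0, Finset.mem_univ 0⟩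

lemma hasDerivAt_Z (b : ℝ) : HasDerivAt (Z y) (Z1 y b) b := by
  rw [show Z y = ∑ j, fun x => Real.exp (x * y j) by ext x; simp [Z]]
  apply HasDerivAt.sum
  intro j _
  have h : HasDerivAt (fun x : ℝ => Real.exp (x * y j)) (Real.exp (b * y j) * y j) b :=
    (hasDerivAt_mul_const (y j)).exp
  simpa [mul_comm] using h

lemma hasDerivAt_Z1 (b : ℝ) : HasDerivAt (Z1 y) (Z2 y b) b := by
  rw [show Z1 y = ∑ j, fun x => y j * Real.exp (x * y j) by ext x; simp [Z1]]
  apply HasDerivAt.sum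
  intro j _
  have h : HasDerivAt (fun x : ℝ => Real.exp (x * y j)) (Real.exp (b * y j) * y j) b :=
    (hasDerivAt_mul_const (y j)).exp
  have := h.const_mul (y j)
  refine this.congr_deriv ?_
  ring

lemma entropy_eq (b : ℝ) :
    softmaxEntropy y b = Real.log (Z y b) - b * (Z1 y b / Z y b) := by
  have hZ := Zpos y b
  have hZ' : (∑ j, Real.exp (b * y j)) ≠ 0 := ne_of_gt hZ
  have expand : ∀ i, softmax y b i * Real.log (softmax y b i)
      = (Real.exp (b * y i) / Z y b) * (b * y i - Real.log (Z y b)) := by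
    intro i
    rw [softmax, Real.log_div (Real.exp_ne_zero _) hZ', Real.log_exp]
    rfl
  simp only [softmaxEntropy, expand]
  simp only [Z, Z1]
  rw [Fin.sum_univ_three, Fin.sum_univ_three, Fin.sum_univ_three]
  have hne : (Real.exp (b * y 0) + Real.exp (b * y 1) + Real.exp (b * y 2)) ≠ 0 := by
    rw [← Fin.sum_univ_three (fun j => Real.exp (b * y j))]; exact ne_of_gt hZ
  field_simp
  ring

lemma hasDerivAt_H (b : ℝ) :
    HasDerivAt (fun x => Real.log (Z y x) - x * (Z1 y x / Z y x))
      (-(b * ((Z2 y b * Z y b - Z1 y b * Z1 y b) / (Z y b)^2))) b := by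
  have hZ := Zpos y b
  have hlog : HasDerivAt (fun x => Real.log (Z y x)) (Z1 y b / Z y b) b :=
    (hasDerivAt_Z y b).log (ne_of_gt hZ)
  have hdiv : HasDerivAt (fun x => Z1 y x / Z y x)
      ((Z2 y b * Z y b - Z1 y b * Z1 y b) / (Z y b)^2) b :=
    (hasDerivAt_Z1 y b).div (hasDerivAt_Z y b) (ne_of_gt hZ)
  have hmul := (hasDerivAt_id b).mul hdiv
  have := hlog.sub hmul
  refine this.congr_deriv ?_
  simp only [id_eq]
  ring

lemma variance_nonneg (b : ℝ) : 0 ≤ Z2 y b * Z y b - Z1 y b * Z1 y b := by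
  have := Finset.sum_mul_sq_le_sq_mul_sq Finset.univ
    (fun j => Real.exp (b * y j / 2)) (fun j => y j * Real.exp (b * y j / 2))
  have h1 : ∀ j : Fin 3, Real.exp (b * y j / 2) * (y j * Real.exp (b * y j / 2))
      = y j * Real.exp (b * y j) := by
    intro j
    have e := Real.exp_add (b * y j / 2) (b * y j / 2)
    rw [show b * y j / 2 + b * y j / 2 = b * y j by ring] at e
    rw [e]; ring
  have h2 : ∀ j : Fin 3, Real.exp (b * y j / 2) ^ 2 = Real.exp (b * y j) := by
    intro j
    have e := Real.exp_add (b * y j / 2) (b * y j / 2)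
    rw [show b * y j / 2 + b * y j / 2 = b * y j by ring] at e
    rw [e]; ring
  have h3 : ∀ j : Fin 3, (y j * Real.exp (b * y j / 2)) ^ 2 = (y j)^2 * Real.exp (b * y j) := by
    intro j
    have e := Real.exp_add (b * y j / 2) (b * y j / 2)
    rw [show b * y j / 2 + b * y j / 2 = b * y j by ring] at e
    rw [e]; ring
  simp only [h1, h2, h3] at this
  have : Z1 y b ^ 2 ≤ Z y b * Z2 y b := by simpa [Z, Z1, Z2] using this
  nlinarith [this]

end SMaux

theorem stmt_0 (y : Fin 3 → ℝ) (β₁ β₂ : ℝ) (h1 : 0 < β₁) (h2 : β₁ ≤ β₂) :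
    softmaxEntropy y β₂ ≤ softmaxEntropy y β₁ := by
  open SMaux in
  have key : AntitoneOn (fun x => Real.log (Z y x) - x * (Z1 y x / Z y x)) (Set.Ici 0) := by
    apply antitoneOn_of_deriv_nonpos (convex_Ici 0)
    · exact fun x _ => (SMaux.hasDerivAt_H y x).differentiableAt.continuousAt.continuousWithinAt
    · intro x _
      exact (SMaux.hasDerivAt_H y x).differentiableAt.differentiableWithinAt
    · intro x hx
      rw [(SMaux.hasDerivAt_H y x).deriv]
      rw [interior_Ici] at hx
      have hv := SMaux.variance_nonneg y x
      have hx' : (0:ℝ) < x := hx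
      have : 0 ≤ x * ((Z2 y x * Z y x - Z1 y x * Z1 y x) / (Z y x)^2) :=
        mul_nonneg hx'.le (div_nonneg hv (sq_nonneg _))
      linarith
  rw [SMaux.entropy_eq, SMaux.entropy_eq]
  exact key (Set.mem_Ici.mpr h1.le) (Set.mem_Ici.mpr (h1.le.trans h2)) h2
end

section
/- Let $y_0, y_1, y_2$ be real numbers, not all equal, and for $\beta > 0$ define $p_i(\beta) = e^{\beta y_i} / \sum_{j=0}^{2} e^{\beta y_j}$. Then the Shannon entropy $H(\beta) = -\sum_{i=0}^{2} p_i(\beta) \log p_i(\beta)$ is strictly decreasing in $\beta$ on $(0, \infty)$. -/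
open Real Finset

noncomputable def Zf (y : Fin 3 → ℝ) (b : ℝ) : ℝ := ∑ j, Real.exp (b * y j)
noncomputable def Sf (y : Fin 3 → ℝ) (b : ℝ) : ℝ := ∑ j, y j * Real.exp (b * y j)
noncomputable def Qf (y : Fin 3 → ℝ) (b : ℝ) : ℝ := ∑ j, y j * (y j * Real.exp (b * y j))

lemma Zpos (y : Fin 3 → ℝ) (b : ℝ) : 0 < Zf y b := by
  rw [Zf, Fin.sum_univ_three]; positivity

lemma entropy_eq (y : Fin 3 → ℝ) (b : ℝ) :
    softmaxEntropy y b = Real.log (Zf y b) - b * (Sf y b / Zf y b) := by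
  have hZ := Zpos y b
  have hZne : Zf y b ≠ 0 := ne_of_gt hZ
  have h1 : Zf y b = Real.exp (b * y 0) + Real.exp (b * y 1) + Real.exp (b * y 2) := by
    rw [Zf, Fin.sum_univ_three]
  rw [h1] at hZne hZ ⊢
  simp only [softmaxEntropy, softmax, Sf, Fin.sum_univ_three]
  rw [Real.log_div (Real.exp_ne_zero _) hZne, Real.log_div (Real.exp_ne_zero _) hZne,
    Real.log_div (Real.exp_ne_zero _) hZne, Real.log_exp, Real.log_exp, Real.log_exp]
  field_simp
  ring

lemma hasDerivZ (y : Fin 3 → ℝ) (b : ℝ) :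
    HasDerivAt (Zf y) (Sf y b) b := by
  rw [show Sf y b = ∑ j, y j * Real.exp (b * y j) from rfl]
  have hfun : Zf y = ∑ j, fun b => Real.exp (b * y j) := by
    funext x; simp only [Zf, Finset.sum_apply]
  rw [hfun]
  apply HasDerivAt.sum
  intro j _
  have := ((hasDerivAt_id b).mul_const (y j)).exp
  refine this.congr_deriv ?_
  simp only [id_eq]
  ring_nf

lemma hasDerivS (y : Fin 3 → ℝ) (b : ℝ) :
    HasDerivAt (Sf y) (Qf y b) b := by
  rw [show Qf y b = ∑ j, y j * (y j * Real.exp (b * y j)) from rfl]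
  have hfun : Sf y = ∑ j, fun b => y j * Real.exp (b * y j) := by
    funext x; simp only [Sf, Finset.sum_apply]
  rw [hfun]
  apply HasDerivAt.sum
  intro j _
  have := (((hasDerivAt_id b).mul_const (y j)).exp).const_mul (y j)
  refine this.congr_deriv ?_
  simp only [id_eq]
  ring_nf

lemma hasDerivH (y : Fin 3 → ℝ) (b : ℝ) :
    HasDerivAt (softmaxEntropy y)
      (-(b * ((Qf y b * Zf y b - Sf y b ^ 2) / (Zf y b) ^ 2))) b := by
  have hZ := Zpos y b
  have h1 := (hasDerivZ y b).log (ne_of_gt hZ)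
  have h2 := (hasDerivAt_id b).mul ((hasDerivS y b).div (hasDerivZ y b) (ne_of_gt hZ))
  have h := h1.sub h2
  have heq : ((fun x => Real.log (Zf y x)) - id * (Sf y / Zf y)) = softmaxEntropy y := by
    funext x; simp only [Pi.sub_apply, Pi.mul_apply, Pi.div_apply, id_eq]; rw [entropy_eq]
  rw [heq] at h
  refine h.congr_deriv ?_
  simp only [Pi.div_apply, id_eq]
  field_simp
  ring

lemma var_pos (y : Fin 3 → ℝ) (hy : ¬ (y 0 = y 1 ∧ y 1 = y 2)) (b : ℝ) :
    0 < Qf y b * Zf y b - Sf y b ^ 2 := by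
  simp only [Qf, Zf, Sf, Fin.sum_univ_three]
  set a0 := Real.exp (b * y 0) with ha0
  set a1 := Real.exp (b * y 1) with ha1
  set a2 := Real.exp (b * y 2) with ha2
  have p0 : 0 < a0 := Real.exp_pos _
  have p1 : 0 < a1 := Real.exp_pos _
  have p2 : 0 < a2 := Real.exp_pos _
  have key : (y 0 * (y 0 * a0) + y 1 * (y 1 * a1) + y 2 * (y 2 * a2)) * (a0 + a1 + a2)
      - (y 0 * a0 + y 1 * a1 + y 2 * a2) ^ 2
      = a0 * a1 * (y 0 - y 1) ^ 2 + a0 * a2 * (y 0 - y 2) ^ 2 + a1 * a2 * (y 1 - y 2) ^ 2 := by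
    ring
  rw [key]
  have n02 : 0 ≤ a0 * a2 * (y 0 - y 2) ^ 2 :=
    mul_nonneg (mul_nonneg p0.le p2.le) (sq_nonneg _)
  rcases not_and_or.mp hy with h | h
  · have hsq : 0 < (y 0 - y 1) ^ 2 := pow_two_pos_of_ne_zero (sub_ne_zero.mpr h)
    have t1 : 0 < a0 * a1 * (y 0 - y 1) ^ 2 := mul_pos (mul_pos p0 p1) hsq
    have n12 : 0 ≤ a1 * a2 * (y 1 - y 2) ^ 2 :=
      mul_nonneg (mul_nonneg p1.le p2.le) (sq_nonneg _)
    linarith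
  · have hsq : 0 < (y 1 - y 2) ^ 2 := pow_two_pos_of_ne_zero (sub_ne_zero.mpr h)
    have t1 : 0 < a1 * a2 * (y 1 - y 2) ^ 2 := mul_pos (mul_pos p1 p2) hsq
    have n01 : 0 ≤ a0 * a1 * (y 0 - y 1) ^ 2 :=
      mul_nonneg (mul_nonneg p0.le p1.le) (sq_nonneg _)
    linarith

theorem stmt_1 (y : Fin 3 → ℝ) (hy : ¬ (y 0 = y 1 ∧ y 1 = y 2)) :
    StrictAntiOn (softmaxEntropy y) (Set.Ioi 0) := by
  apply strictAntiOn_of_deriv_neg (convex_Ioi 0)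
  · exact fun x _ => ((hasDerivH y x).differentiableAt.continuousAt).continuousWithinAt
  · intro x hx
    rw [interior_Ioi] at hx
    rw [(hasDerivH y x).deriv]
    have hZ := Zpos y x
    have hv := var_pos y hy x
    have : 0 < x * ((Qf y x * Zf y x - Sf y x ^ 2) / (Zf y x) ^ 2) := by
      apply mul_pos hx
      positivity
    linarith
end

section
/- Let $n \ge 1$, let $y_0, \ldots, y_{n-1}$ be real numbers, and for $\beta > 0$ define softmax probabilities $p_i(\beta) = e^{\beta y_i} / \sum_{j} e^{\beta y_j}$. Then the entropy $H(\beta) = -\sum_i p_i(\beta)\log p_i(\beta)$ is monotonically decreasing on $(0,\infty)$. -/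
open Real Finset

noncomputable def softmaxN (n : ℕ) (y : Fin n → ℝ) (β : ℝ) (i : Fin n) : ℝ :=
  Real.exp (β * y i) / ∑ j, Real.exp (β * y j)

noncomputable def softmaxEntropyN (n : ℕ) (y : Fin n → ℝ) (β : ℝ) : ℝ :=
  -∑ i, softmaxN n y β i * Real.log (softmaxN n y β i)

noncomputable def smZ (n : ℕ) (y : Fin n → ℝ) (β : ℝ) : ℝ := ∑ j, Real.exp (β * y j)
noncomputable def smA (n : ℕ) (y : Fin n → ℝ) (β : ℝ) : ℝ := ∑ j, y j * Real.exp (β * y j)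
noncomputable def smB (n : ℕ) (y : Fin n → ℝ) (β : ℝ) : ℝ := ∑ j, y j ^ 2 * Real.exp (β * y j)

lemma smZ_pos (n : ℕ) (hn : 1 ≤ n) (y : Fin n → ℝ) (β : ℝ) : 0 < smZ n y β := by
  have : Nonempty (Fin n) := Fin.pos_iff_nonempty.mp hn
  exact Finset.sum_pos (fun i _ => Real.exp_pos _) Finset.univ_nonempty

lemma hasDerivAt_smZ (n : ℕ) (y : Fin n → ℝ) (β : ℝ) :
    HasDerivAt (smZ n y) (smA n y β) β := by
  apply HasDerivAt.fun_sum
  intro i _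
  have h : HasDerivAt (fun x : ℝ => x * y i) (y i) β := hasDerivAt_mul_const (y i)
  have := h.exp
  simpa [mul_comm] using this

lemma hasDerivAt_smA (n : ℕ) (y : Fin n → ℝ) (β : ℝ) :
    HasDerivAt (smA n y) (smB n y β) β := by
  apply HasDerivAt.fun_sum
  intro i _
  have h : HasDerivAt (fun x : ℝ => x * y i) (y i) β := hasDerivAt_mul_const (y i)
  have := (h.exp).const_mul (y i)
  simpa [mul_comm, mul_assoc, pow_two, mul_left_comm] using this

lemma entropy_eq_s2 (n : ℕ) (hn : 1 ≤ n) (y : Fin n → ℝ) (β : ℝ) :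
    softmaxEntropyN n y β = Real.log (smZ n y β) - β * smA n y β / smZ n y β := by
  have hZ := smZ_pos n hn y β
  have hZ' : (∑ j, Real.exp (β * y j)) ≠ 0 := by unfold smZ at hZ; exact ne_of_gt hZ
  have hlog : ∀ i : Fin n, Real.log (softmaxN n y β i) = β * y i - Real.log (smZ n y β) := by
    intro i
    unfold softmaxN smZ
    rw [Real.log_div (Real.exp_ne_zero _) hZ', Real.log_exp]
  unfold softmaxEntropyN
  have : ∀ i : Fin n, softmaxN n y β i * Real.log (softmaxN n y β i)
      = (β * (y i * Real.exp (β * y i)) - Real.exp (β * y i) * Real.log (smZ n y β)) / smZ n y β := by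
    intro i
    rw [hlog i]
    unfold softmaxN smZ
    field_simp
  rw [Finset.sum_congr rfl (fun i _ => this i)]
  rw [← Finset.sum_div, Finset.sum_sub_distrib, ← Finset.mul_sum, ← Finset.sum_mul]
  unfold smA smZ
  field_simp [hZ']
  ring

lemma cauchy_sm (n : ℕ) (y : Fin n → ℝ) (β : ℝ) :
    (smA n y β) ^ 2 ≤ smB n y β * smZ n y β := by
  have h := Finset.sum_mul_sq_le_sq_mul_sq Finset.univ
    (fun i : Fin n => y i * Real.sqrt (Real.exp (β * y i)))
    (fun i : Fin n => Real.sqrt (Real.exp (β * y i)))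
  have he : ∀ i : Fin n, Real.sqrt (Real.exp (β * y i)) * Real.sqrt (Real.exp (β * y i))
      = Real.exp (β * y i) := fun i => Real.mul_self_sqrt (Real.exp_pos _).le
  have he2 : ∀ i : Fin n, Real.sqrt (Real.exp (β * y i)) ^ 2
      = Real.exp (β * y i) := fun i => Real.sq_sqrt (Real.exp_pos _).le
  calc (smA n y β) ^ 2
      = (∑ i, (y i * Real.sqrt (Real.exp (β * y i))) * Real.sqrt (Real.exp (β * y i))) ^ 2 := by
        unfold smA; congr 1; apply Finset.sum_congr rfl; intro i _
        rw [mul_assoc, he i]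
    _ ≤ (∑ i, (y i * Real.sqrt (Real.exp (β * y i))) ^ 2) * ∑ i, (Real.sqrt (Real.exp (β * y i))) ^ 2 := h
    _ = smB n y β * smZ n y β := by
        unfold smB smZ; congr 1
        · apply Finset.sum_congr rfl; intro i _; rw [mul_pow, he2 i]
        · apply Finset.sum_congr rfl; intro i _; rw [he2 i]

theorem stmt_2 (n : ℕ) (hn : 1 ≤ n) (y : Fin n → ℝ) :
    AntitoneOn (softmaxEntropyN n y) (Set.Ioi 0) := by
  have key : AntitoneOn (fun β => Real.log (smZ n y β) - β * smA n y β / smZ n y β)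
      (Set.Ioi 0) := by
    have hder : ∀ β : ℝ, HasDerivAt (fun β => Real.log (smZ n y β) - β * smA n y β / smZ n y β)
        (-(β * ((smB n y β * smZ n y β - smA n y β ^ 2) / smZ n y β ^ 2))) β := by
      intro β
      have hZ := smZ_pos n hn y β
      have h1 : HasDerivAt (fun β => Real.log (smZ n y β)) (smA n y β / smZ n y β) β :=
        (hasDerivAt_smZ n y β).log (ne_of_gt hZ)
      have h2 : HasDerivAt (fun β => β * smA n y β)
          (1 * smA n y β + β * smB n y β) β :=
        (hasDerivAt_id β).mul (hasDerivAt_smA n y β)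
      have h3 : HasDerivAt (fun β => β * smA n y β / smZ n y β)
          (((1 * smA n y β + β * smB n y β) * smZ n y β - β * smA n y β * smA n y β)
            / smZ n y β ^ 2) β :=
        h2.div (hasDerivAt_smZ n y β) (ne_of_gt hZ)
      have h4 : HasDerivAt (fun β => Real.log (smZ n y β) - β * smA n y β / smZ n y β) _ β :=
        h1.sub h3
      convert h4 using 1
      field_simp
      ring
    apply antitoneOn_of_hasDerivWithinAt_nonpos (convex_Ioi 0)
    · exact fun β _ => (hder β).continuousAt.continuousWithinAt
    · exact fun β _ => (hder β).hasDerivWithinAt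
    · intro β hβ
      rw [interior_Ioi] at hβ
      have hZ := smZ_pos n hn y β
      have hc := cauchy_sm n y β
      have : 0 ≤ β * ((smB n y β * smZ n y β - smA n y β ^ 2) / smZ n y β ^ 2) := by
        apply mul_nonneg (le_of_lt hβ)
        apply div_nonneg (by linarith) (by positivity)
      linarith
  intro a ha b hb hab
  rw [entropy_eq_s2 n hn y a, entropy_eq_s2 n hn y b]
  exact key ha hb hab
end
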